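/- Let X be a set and let φ : FreeGroup X → ℤ be the group homomorphism sending each generator x ∈ X to 1 (the exponent-sum homomorphism). Then the kernel of φ is the normal closure in FreeGroup X of the set { x⁻¹·y : x, y ∈ X }. -/

import Mathlib

theorem stmt_16 (X : Type*) :
    (FreeGroup.lift (fun _ : X => Multiplicative.ofAdd (1 : ℤ))).ker =
      Subgroup.normalClosure
        {w : FreeGroup X | ∃ x y : X, w = (FreeGroup.of x)⁻¹ * FreeGroup.of y} := by
  set φ := FreeGroup.lift (fun _ : X => Multiplicative.ofAdd (1 : ℤ)) with hφ
  set S : Set (FreeGroup X) :=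
    {w : FreeGroup X | ∃ x y : X, w = (FreeGroup.of x)⁻¹ * FreeGroup.of y} with hS
  have hle : Subgroup.normalClosure S ≤ φ.ker := by
    apply Subgroup.normalClosure_le_normal
    rintro w ⟨x, y, rfl⟩
    simp [φ, MonoidHom.mem_ker]
  refine le_antisymm ?_ hle
  rcases isEmpty_or_nonempty X with hX | hne
  · intro w _
    have : w = 1 := Subsingleton.elim w 1
    rw [this]; exact Subgroup.one_mem _
  · obtain ⟨x₀⟩ := hne
    set N := Subgroup.normalClosure S with hN
    have hNnormal : N.Normal := Subgroup.normalClosure_normal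
    -- ψ : quotient → Multiplicative ℤ
    have hNle : N ≤ φ.ker := hle
    set ψ : FreeGroup X ⧸ N →* Multiplicative ℤ := QuotientGroup.lift N φ hNle with hψ
    set σ : Multiplicative ℤ →* FreeGroup X ⧸ N :=
      zpowersHom _ (QuotientGroup.mk (FreeGroup.of x₀)) with hσ
    have hgen : ∀ x : X, (QuotientGroup.mk (FreeGroup.of x) : FreeGroup X ⧸ N) =
        QuotientGroup.mk (FreeGroup.of x₀) := by
      intro x
      rw [QuotientGroup.eq]
      exact Subgroup.subset_normalClosure ⟨x, x₀, rfl⟩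
    have hσψ : ∀ q : FreeGroup X ⧸ N, σ (ψ q) = q := by
      intro q
      induction q using QuotientGroup.induction_on with
      | H w =>
        induction w using FreeGroup.induction_on with
        | C1 => simp
        | of x =>
          show σ (ψ (QuotientGroup.mk (FreeGroup.of x))) = QuotientGroup.mk (FreeGroup.of x)
          have h1 : ψ (QuotientGroup.mk (FreeGroup.of x)) = Multiplicative.ofAdd 1 := by
            show φ (FreeGroup.of x) = _
            simp [φ]
          rw [h1, hgen x]
          simp [σ]
        | inv_of x ih =>
          show σ (ψ ((QuotientGroup.mk (FreeGroup.of x) : FreeGroup X ⧸ N)⁻¹)) =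
              (QuotientGroup.mk (FreeGroup.of x) : FreeGroup X ⧸ N)⁻¹
          rw [map_inv, map_inv]
          exact congrArg Inv.inv ih
        | mul a b iha ihb =>
          have : (QuotientGroup.mk (a * b) : FreeGroup X ⧸ N) =
              QuotientGroup.mk a * QuotientGroup.mk b := rfl
          rw [this, map_mul, map_mul, iha, ihb]
    intro w hw
    have h1 : ψ (QuotientGroup.mk w) = 1 := hw
    have h2 : (QuotientGroup.mk w : FreeGroup X ⧸ N) = 1 := by
      have := hσψ (QuotientGroup.mk w)
      rw [h1, map_one] at this
      exact this.symm
    rwa [QuotientGroup.eq_one_iff] at h2
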